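/- Let γ = (γ_i)_{i≥1} and δ = (δ_i)_{i≥1} be nonincreasing sequences of nonnegative real numbers with ∑_{i≥1} γ_i ≤ 1 and ∑_{i≥1} δ_i ≤ 1. If ∑_{k≥1} γ_k^m = ∑_{k≥1} δ_k^m for every odd integer m ≥ 3, then γ_i = δ_i for all i. -/

import Mathlib

private lemma summable_pow_aux {f : ℕ → ℝ} (hnn : ∀ i, 0 ≤ f i) (hs : Summable f)
    (hone : (∑' i, f i) ≤ 1) {m : ℕ} (hm : 1 ≤ m) : Summable (fun k => f k ^ m) := by
  apply hs.of_nonneg_of_le (fun k => pow_nonneg (hnn k) m)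
  intro k
  have h1 : f k ≤ 1 := le_trans (Summable.le_tsum hs k fun j _ => hnn j) hone
  calc f k ^ m ≤ f k ^ 1 := pow_le_pow_of_le_one (hnn k) h1 hm
    _ = f k := pow_one _

private lemma tail_bound_aux {f : ℕ → ℝ} (hmono : ∀ i, f (i + 1) ≤ f i) (hnn : ∀ i, 0 ≤ f i)
    (hs : Summable f) (hone : (∑' i, f i) ≤ 1) (i : ℕ) {m : ℕ} (hm : 1 ≤ m) :
    (∑' k : ℕ, f (k + i) ^ m) ≤ f i ^ (m - 1) := by
  have anti : Antitone f := antitone_nat_of_succ_le hmono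
  have hle : ∀ k, f (k + i) ≤ f i := fun k => anti (Nat.le_add_left i k)
  have hsp : Summable (fun k => f k ^ m) := summable_pow_aux hnn hs hone hm
  have hspt : Summable (fun k => f (k + i) ^ m) := (summable_nat_add_iff i).mpr hsp
  have hst : Summable (fun k => f (k + i)) := (summable_nat_add_iff i).mpr hs
  have hb : ∀ k, f (k + i) ^ m ≤ f i ^ (m - 1) * f (k + i) := by
    intro k
    have hmm : m - 1 + 1 = m := by omega
    calc f (k + i) ^ m = f (k + i) ^ (m - 1) * f (k + i) := by rw [← pow_succ, hmm]
      _ ≤ f i ^ (m - 1) * f (k + i) :=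
        mul_le_mul_of_nonneg_right (pow_le_pow_left₀ (hnn _) (hle k) _) (hnn _)
  have h1 : (∑' k : ℕ, f (k + i) ^ m) ≤ ∑' k : ℕ, f i ^ (m - 1) * f (k + i) :=
    Summable.tsum_le_tsum hb hspt (hst.mul_left _)
  have h2 : (∑' k : ℕ, f i ^ (m - 1) * f (k + i)) = f i ^ (m - 1) * ∑' k : ℕ, f (k + i) :=
    tsum_mul_left
  have h3 : (∑' k : ℕ, f (k + i)) ≤ 1 := by
    have := Summable.sum_add_tsum_nat_add (f := f) i hs
    have hfin : 0 ≤ ∑ k ∈ Finset.range i, f k := Finset.sum_nonneg fun j _ => hnn j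
    linarith
  calc (∑' k : ℕ, f (k + i) ^ m) ≤ f i ^ (m - 1) * ∑' k : ℕ, f (k + i) := by rw [← h2]; exact h1
    _ ≤ f i ^ (m - 1) * 1 := by
        exact mul_le_mul_of_nonneg_left h3 (pow_nonneg (hnn i) _)
    _ = f i ^ (m - 1) := mul_one _

private lemma key_aux {γ δ : ℕ → ℝ}
    (hγmono : ∀ i, γ (i + 1) ≤ γ i) (hγnonneg : ∀ i, 0 ≤ γ i)
    (hγsum : Summable γ) (hγone : (∑' i : ℕ, γ i) ≤ 1)
    (hδmono : ∀ i, δ (i + 1) ≤ δ i) (hδnonneg : ∀ i, 0 ≤ δ i)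
    (hδsum : Summable δ) (hδone : (∑' i : ℕ, δ i) ≤ 1)
    (h : ∀ m : ℕ, 3 ≤ m → Odd m → (∑' k : ℕ, γ k ^ m) = ∑' k : ℕ, δ k ^ m)
    (i : ℕ) (hlt : ∀ j < i, γ j = δ j) (hib : δ i < γ i) : False := by
  set a := γ i with ha
  set b := δ i with hb
  have ha0 : 0 < a := lt_of_le_of_lt (hδnonneg i) hib
  -- choose a good odd exponent m with b ^ (m - 1) < a ^ m
  obtain ⟨m, hm3, hmodd, hkey⟩ : ∃ m : ℕ, 3 ≤ m ∧ Odd m ∧ b ^ (m - 1) < a ^ m := by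
    rcases eq_or_lt_of_le (hδnonneg i) with hb0 | hb0
    · refine ⟨3, le_refl 3, ⟨1, by ring⟩, ?_⟩
      have hbz : b = 0 := hb.trans hb0.symm
      rw [hbz]
      norm_num
      positivity
    · have hr : 1 < a / b := (one_lt_div hb0).mpr hib
      obtain ⟨n, hn⟩ := pow_unbounded_of_one_lt (1 / a) hr
      refine ⟨2 * n + 3, by omega, ⟨n + 1, by ring⟩, ?_⟩
      have hmn : n ≤ 2 * n + 3 - 1 := by omega
      have h1 : (a / b) ^ n ≤ (a / b) ^ (2 * n + 3 - 1) :=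
        pow_le_pow_right₀ (le_of_lt hr) hmn
      have h2 : 1 / a < (a / b) ^ (2 * n + 3 - 1) := lt_of_lt_of_le hn h1
      rw [div_pow, lt_div_iff₀ (pow_pos hb0 _)] at h2
      have h3 : 1 / a * b ^ (2 * n + 3 - 1) < a ^ (2 * n + 3 - 1) := h2
      have h4 : b ^ (2 * n + 3 - 1) < a * a ^ (2 * n + 3 - 1) := by
        have := mul_lt_mul_of_pos_left h3 ha0
        rwa [← mul_assoc, mul_one_div, div_self (ne_of_gt ha0), one_mul] at this
      calc b ^ (2 * n + 3 - 1) < a * a ^ (2 * n + 3 - 1) := h4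
        _ = a ^ (2 * n + 3) := by
            have hmm : 2 * n + 3 - 1 + 1 = 2 * n + 3 := by omega
            rw [← pow_succ', hmm]
  have hm1 : 1 ≤ m := by omega
  have hsg : Summable (fun k => γ k ^ m) := summable_pow_aux hγnonneg hγsum hγone hm1
  have hsd : Summable (fun k => δ k ^ m) := summable_pow_aux hδnonneg hδsum hδone hm1
  have e1 := Summable.sum_add_tsum_nat_add (f := fun k => γ k ^ m) i hsg
  have e2 := Summable.sum_add_tsum_nat_add (f := fun k => δ k ^ m) i hsd
  have efin : (∑ k ∈ Finset.range i, γ k ^ m) = ∑ k ∈ Finset.range i, δ k ^ m :=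
    Finset.sum_congr rfl fun j hj => by rw [hlt j (Finset.mem_range.mp hj)]
  have heq := h m hm3 hmodd
  have etail : (∑' k : ℕ, γ (k + i) ^ m) = ∑' k : ℕ, δ (k + i) ^ m := by
    linarith
  have hγtail : a ^ m ≤ ∑' k : ℕ, γ (k + i) ^ m := by
    have hspt : Summable (fun k => γ (k + i) ^ m) := (summable_nat_add_iff i).mpr hsg
    have := Summable.le_tsum hspt 0 (fun j _ => pow_nonneg (hγnonneg _) m)
    simpa using this
  have hδtail : (∑' k : ℕ, δ (k + i) ^ m) ≤ b ^ (m - 1) :=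
    tail_bound_aux hδmono hδnonneg hδsum hδone i hm1
  linarith

/-- two nonincreasing sequences of nonnegative reals with sums at most `1`
that have the same odd power sums `∑_k γ_k^m` (for all odd `m ≥ 3`) coincide. -/
theorem eq_of_odd_power_sums_eq
    (γ δ : ℕ → ℝ)
    (hγmono : ∀ i, γ (i + 1) ≤ γ i) (hγnonneg : ∀ i, 0 ≤ γ i)
    (hγsum : Summable γ) (hγone : (∑' i : ℕ, γ i) ≤ 1)
    (hδmono : ∀ i, δ (i + 1) ≤ δ i) (hδnonneg : ∀ i, 0 ≤ δ i)
    (hδsum : Summable δ) (hδone : (∑' i : ℕ, δ i) ≤ 1)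
    (h : ∀ m : ℕ, 3 ≤ m → Odd m → (∑' k : ℕ, γ k ^ m) = ∑' k : ℕ, δ k ^ m) :
    γ = δ := by
  by_contra hne
  have hex : ∃ i, γ i ≠ δ i := Function.ne_iff.mp hne
  classical
  let i := Nat.find hex
  have hi : γ i ≠ δ i := Nat.find_spec hex
  have hmin : ∀ j < i, γ j = δ j := fun j hj => by
    by_contra hc
    exact Nat.find_min hex hj hc
  rcases lt_or_gt_of_ne hi with hlt | hgt
  · exact key_aux hδmono hδnonneg hδsum hδone hγmono hγnonneg hγsum hγone
      (fun m h1 h2 => (h m h1 h2).symm) i (fun j hj => (hmin j hj).symm) hlt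
  · exact key_aux hγmono hγnonneg hγsum hγone hδmono hδnonneg hδsum hδone
      h i hmin hgt
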